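/- Let 𝒳 be a nonempty finite set, let p(x|x') be a strictly positive Markov kernel on 𝒳 with a strictly positive stationary distribution p(x), let q(x'|x) be a strictly positive Markov kernel on 𝒳 and let q₁ be a probability distribution on 𝒳. Then for every n ≥ 1 the lower bound is tight, i.e. L_B(n) = L, if and only if q(x'|x) = p^r(x'|x) for all x' and all x with Q_n(x) > 0, where L = Σ_x q₁(x) log p(x), L_B(n) = Σ_x q_{n+1}(x) log p(x) + n Σ_{x,x'} q(x'|x) Q_n(x) [log p(x|x') − log q(x'|x)], and p^r(x'|x) = p(x|x') p(x') / p(x). -/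

import Mathlib

open Finset

/-- `qIter q q1 k` is the distribution `q_{k+1}` obtained from the data distribution
`q₁ = qIter q q1 0` by `k` applications of the Markov kernel `q`,
where `q x x'` denotes `q(x | x')`, i.e. the transition probability from `x'` to `x`. -/
noncomputable def qIter {X : Type} [Fintype X] (q : X → X → ℝ) (q1 : X → ℝ) : ℕ → X → ℝ
  | 0 => q1
  | k + 1 => fun x => ∑ x' : X, q x x' * qIter q q1 k x'

/-- `Qavg q q1 n x = Q_n(x) = (1/n) ∑_{k=1}^n q_k(x)`. -/
noncomputable def Qavg {X : Type} [Fintype X] (q : X → X → ℝ) (q1 : X → ℝ) (n : ℕ) (x : X) : ℝ :=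
  (1 / (n : ℝ)) * ∑ k ∈ Finset.range n, qIter q q1 k x

private lemma gibbs_aux {X : Type} [Fintype X] (f g : X → ℝ)
    (hf : ∀ x, 0 < f x) (hg : ∀ x, 0 < g x)
    (hfs : ∑ x : X, f x = 1) (hgs : ∑ x : X, g x = 1) :
    (∑ x : X, f x * (Real.log (g x) - Real.log (f x)) ≤ 0) ∧
    ((∑ x : X, f x * (Real.log (g x) - Real.log (f x)) = 0) ↔ ∀ x, f x = g x) := by
  have hlog : ∀ x : X, Real.log (g x) - Real.log (f x) = Real.log (g x / f x) := fun x =>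
    (Real.log_div (hg x).ne' (hf x).ne').symm
  have hterm : ∀ x : X, f x * (Real.log (g x) - Real.log (f x)) ≤ g x - f x := by
    intro x
    rw [hlog]
    calc f x * Real.log (g x / f x) ≤ f x * (g x / f x - 1) :=
          mul_le_mul_of_nonneg_left (Real.log_le_sub_one_of_pos (div_pos (hg x) (hf x))) (hf x).le
      _ = g x - f x := by
            have h := (hf x).ne'
            field_simp
  have hz : ∑ x : X, (g x - f x) = 0 := by rw [Finset.sum_sub_distrib, hfs, hgs]; ring
  have hsum : ∑ x : X, f x * (Real.log (g x) - Real.log (f x)) ≤ 0 := by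
    calc ∑ x : X, f x * (Real.log (g x) - Real.log (f x)) ≤ ∑ x : X, (g x - f x) :=
          Finset.sum_le_sum fun x _ => hterm x
      _ = 0 := hz
  refine ⟨hsum, ⟨?_, ?_⟩⟩
  · intro h0 x
    by_contra hne
    have hne' : g x / f x ≠ 1 :=
      fun h1 => hne (((div_eq_one_iff_eq (hf x).ne').mp h1).symm)
    have hlt : f x * (Real.log (g x) - Real.log (f x)) < g x - f x := by
      rw [hlog]
      calc f x * Real.log (g x / f x) < f x * (g x / f x - 1) :=
            mul_lt_mul_of_pos_left
              (Real.log_lt_sub_one_of_pos (div_pos (hg x) (hf x)) hne') (hf x)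
        _ = g x - f x := by
              have h := (hf x).ne'
              field_simp
    have hstrict : ∑ x : X, f x * (Real.log (g x) - Real.log (f x)) < ∑ x : X, (g x - f x) :=
      Finset.sum_lt_sum (fun i _ => hterm i) ⟨x, Finset.mem_univ x, hlt⟩
    rw [hz] at hstrict
    linarith
  · intro h
    have : ∀ x : X, f x * (Real.log (g x) - Real.log (f x)) = 0 := fun x => by rw [h x]; ring
    simp [this]

private lemma qIter_nonneg {X : Type} [Fintype X] (q : X → X → ℝ) (q1 : X → ℝ)
    (hq : ∀ x x' : X, 0 ≤ q x x') (hq1 : ∀ x, 0 ≤ q1 x) :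
    ∀ k (x : X), 0 ≤ qIter q q1 k x
  | 0, x => hq1 x
  | k + 1, x => Finset.sum_nonneg fun x' _ =>
      mul_nonneg (hq x x') (qIter_nonneg q q1 hq hq1 k x')

/-- the lower bound `L_B(n)` is tight, i.e. equals the likelihood `L`,
iff `q(x'|x)` coincides with the reverse kernel `p^r(x'|x) = p(x|x') p(x') / p(x)`
for all `x'` and all `x` with `Q_n(x) > 0`. -/
theorem lower_bound_tight_iff_reverse_kernel
    {X : Type} [Fintype X] [Nonempty X]
    (p : X → X → ℝ) (pd : X → ℝ) (q : X → X → ℝ) (q1 : X → ℝ)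
    (hp_pos : ∀ x x' : X, 0 < p x x')
    (hp_kernel : ∀ x' : X, ∑ x : X, p x x' = 1)
    (hpd_pos : ∀ x, 0 < pd x)
    (hpd_sum : ∑ x : X, pd x = 1)
    (hpd_stat : ∀ x, pd x = ∑ x' : X, p x x' * pd x')
    (hq_pos : ∀ x' x : X, 0 < q x' x)
    (hq_kernel : ∀ x : X, ∑ x' : X, q x' x = 1)
    (hq1_nonneg : ∀ x, 0 ≤ q1 x)
    (hq1_sum : ∑ x : X, q1 x = 1)
    (n : ℕ) (hn : 1 ≤ n) :
    (∑ x : X, qIter q q1 n x * Real.log (pd x)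
        + (n : ℝ) * ∑ x : X, ∑ x' : X,
            q x' x * Qavg q q1 n x * (Real.log (p x x') - Real.log (q x' x))
      = ∑ x : X, q1 x * Real.log (pd x))
    ↔ (∀ x : X, 0 < Qavg q q1 n x → ∀ x' : X, q x' x = p x x' * pd x' / pd x) := by
  have hn0 : (0:ℝ) < (n : ℝ) := by exact_mod_cast Nat.lt_of_lt_of_le Nat.zero_lt_one hn
  set T : X → ℝ := fun x => ∑ k ∈ Finset.range n, qIter q q1 k x with hT
  set S : X → ℝ := fun x => ∑ x' : X,
      q x' x * (Real.log (p x x' * pd x' / pd x) - Real.log (q x' x)) with hS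
  have hT_nonneg : ∀ x, 0 ≤ T x := fun x =>
    Finset.sum_nonneg fun k _ => qIter_nonneg q q1 (fun a b => (hq_pos a b).le) hq1_nonneg k x
  have hQavgT : ∀ x, Qavg q q1 n x = (1 / (n : ℝ)) * T x := fun x => rfl
  have hlogexp : ∀ x x' : X, Real.log (p x x' * pd x' / pd x)
      = Real.log (p x x') + Real.log (pd x') - Real.log (pd x) := by
    intro x x'
    rw [Real.log_div (mul_pos (hp_pos x x') (hpd_pos x')).ne' (hpd_pos x).ne',
      Real.log_mul (hp_pos x x').ne' (hpd_pos x').ne']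
  -- key algebraic identity
  have key : (∑ x : X, qIter q q1 n x * Real.log (pd x)
        + (n : ℝ) * ∑ x : X, ∑ x' : X,
            q x' x * Qavg q q1 n x * (Real.log (p x x') - Real.log (q x' x)))
      - ∑ x : X, q1 x * Real.log (pd x) = ∑ x : X, T x * S x := by
    have hdouble : (n : ℝ) * ∑ x : X, ∑ x' : X,
        q x' x * Qavg q q1 n x * (Real.log (p x x') - Real.log (q x' x))
        = ∑ x : X, T x * ∑ x' : X, q x' x * (Real.log (p x x') - Real.log (q x' x)) := by
      rw [Finset.mul_sum]
      refine Finset.sum_congr rfl fun x _ => ?_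
      rw [Finset.mul_sum, Finset.mul_sum]
      refine Finset.sum_congr rfl fun x' _ => ?_
      rw [hQavgT]
      field_simp
    have hSx : ∀ x : X, T x * S x
        = T x * (∑ x' : X, q x' x * (Real.log (p x x') - Real.log (q x' x)))
          + T x * (∑ x' : X, q x' x * Real.log (pd x'))
          - T x * Real.log (pd x) := by
      intro x
      have hsx : S x = (∑ x' : X, q x' x * (Real.log (p x x') - Real.log (q x' x)))
          + (∑ x' : X, q x' x * Real.log (pd x'))
          - (∑ x' : X, q x' x) * Real.log (pd x) := by
        rw [hS, Finset.sum_mul, ← Finset.sum_add_distrib, ← Finset.sum_sub_distrib]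
        refine Finset.sum_congr rfl fun x' _ => ?_
        rw [hlogexp]
        ring
      rw [hsx, hq_kernel]
      ring
    have h1 : ∀ x' : X, ∑ x : X, q x' x * T x
        = ∑ k ∈ Finset.range n, qIter q q1 (k + 1) x' := by
      intro x'
      simp only [hT, Finset.mul_sum]
      rw [Finset.sum_comm]
      exact Finset.sum_congr rfl fun k _ => rfl
    have hmid : ∑ x : X, T x * (∑ x' : X, q x' x * Real.log (pd x'))
        = ∑ x : X, (∑ k ∈ Finset.range n, qIter q q1 (k + 1) x) * Real.log (pd x) := by
      calc ∑ x : X, T x * (∑ x' : X, q x' x * Real.log (pd x'))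
          = ∑ x : X, ∑ x' : X, q x' x * T x * Real.log (pd x') := by
            refine Finset.sum_congr rfl fun x _ => ?_
            rw [Finset.mul_sum]
            exact Finset.sum_congr rfl fun x' _ => by ring
        _ = ∑ x' : X, ∑ x : X, q x' x * T x * Real.log (pd x') := Finset.sum_comm
        _ = ∑ x' : X, (∑ x : X, q x' x * T x) * Real.log (pd x') := by
            refine Finset.sum_congr rfl fun x' _ => ?_
            rw [Finset.sum_mul]
        _ = ∑ x : X, (∑ k ∈ Finset.range n, qIter q q1 (k + 1) x) * Real.log (pd x) := by
            exact Finset.sum_congr rfl fun x' _ => by rw [h1]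
    have htel : ∀ x : X, (∑ k ∈ Finset.range n, qIter q q1 (k + 1) x) - T x
        = qIter q q1 n x - q1 x := by
      intro x
      have h := Finset.sum_range_sub (f := fun k => qIter q q1 k x) n
      rw [Finset.sum_sub_distrib] at h
      rw [show qIter q q1 0 x = q1 x from rfl] at h
      simpa [hT] using h
    have hexp : ∑ x : X, T x * S x
        = (∑ x : X, (T x * (∑ x' : X, q x' x * (Real.log (p x x') - Real.log (q x' x)))
            + T x * (∑ x' : X, q x' x * Real.log (pd x'))))
          - ∑ x : X, T x * Real.log (pd x) := by
      rw [← Finset.sum_sub_distrib]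
      exact Finset.sum_congr rfl fun x _ => hSx x
    rw [hdouble, hexp, Finset.sum_add_distrib, hmid]
    have hfin : ∑ x : X, (∑ k ∈ Finset.range n, qIter q q1 (k + 1) x) * Real.log (pd x)
        - ∑ x : X, T x * Real.log (pd x)
        = ∑ x : X, qIter q q1 n x * Real.log (pd x) - ∑ x : X, q1 x * Real.log (pd x) := by
      rw [← Finset.sum_sub_distrib, ← Finset.sum_sub_distrib]
      refine Finset.sum_congr rfl fun x _ => ?_
      rw [← sub_mul, ← sub_mul, htel x]
    linarith [hfin]
  -- Gibbs inequality per state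
  have hGibbs : ∀ x : X, S x ≤ 0 ∧ (S x = 0 ↔ ∀ x' : X, q x' x = p x x' * pd x' / pd x) := by
    intro x
    have hg : ∀ x' : X, 0 < p x x' * pd x' / pd x := fun x' => by
      have := hp_pos x x'
      have := hpd_pos x'
      have := hpd_pos x
      positivity
    have hgs : ∑ x' : X, p x x' * pd x' / pd x = 1 := by
      rw [← Finset.sum_div, ← hpd_stat x]
      exact div_self (hpd_pos x).ne'
    exact gibbs_aux (fun x' => q x' x) (fun x' => p x x' * pd x' / pd x)
      (fun x' => hq_pos x' x) hg (hq_kernel x) hgs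
  constructor
  · intro heq x hQ x'
    have hsum0 : ∑ x : X, T x * S x = 0 := by rw [← key]; linarith
    have hnp : ∀ y ∈ Finset.univ (α := X), T y * S y ≤ 0 := fun y _ =>
      mul_nonpos_of_nonneg_of_nonpos (hT_nonneg y) (hGibbs y).1
    have hall := (Finset.sum_eq_zero_iff_of_nonpos hnp).mp hsum0 x (Finset.mem_univ x)
    have hTx : 0 < T x := by
      by_contra hc
      push_neg at hc
      have hle : (1 / (n : ℝ)) * T x ≤ 0 :=
        mul_nonpos_of_nonneg_of_nonpos (by positivity) hc
      rw [hQavgT] at hQ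
      linarith
    have hSx0 : S x = 0 := by
      rcases mul_eq_zero.mp hall with h | h
      · exact absurd h hTx.ne'
      · exact h
    exact ((hGibbs x).2.mp hSx0) x'
  · intro h
    have hall : ∀ x : X, T x * S x = 0 := by
      intro x
      rcases eq_or_lt_of_le (hT_nonneg x) with h0 | h0
      · rw [← h0, zero_mul]
      · have hQ : 0 < Qavg q q1 n x := by
          rw [hQavgT]
          exact mul_pos (by positivity) h0
        rw [(hGibbs x).2.mpr (h x hQ), mul_zero]
    have hz : ∑ x : X, T x * S x = 0 := Finset.sum_eq_zero fun x _ => hall x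
    linarith [key, hz]
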